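/- arXiv:1408.1555 — 3 statements merged into one kernel-verified Lean document; each statement's English description precedes it below -/
import Mathlib

section
/- Let a Lie group G act smoothly on a manifold M, let α be a basic differential k-form on M (G-invariant and horizontal), and let p₁, p₂ : U → M be smooth maps from an open subset U of ℝⁿ such that p₂(u) = a(u)·p₁(u) for some smooth function a : U → G. Then p₁*α = p₂*α. -/
open scoped Manifold

noncomputable section

/-- Points of `ℝⁿ`. -/
abbrev Eucl (n : ℕ) : Type := EuclideanSpace ℝ (Fin n)

variable {E : Type*} [NormedAddCommGroup E] [NormedSpace ℝ E]
  {H : Type*} [TopologicalSpace H] (I : ModelWithCorners ℝ E H)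
  (M : Type*) [TopologicalSpace M] [ChartedSpace H M] [IsManifold I (⊤ : ℕ∞) M]

/-- An (ordinary) differential `k`-form on a manifold `M`: an alternating `k`-linear
functional on each tangent space.  (Smoothness is imposed separately via
`IsSmoothForm`.) -/
def MForm (k : ℕ) : Type _ := ∀ x : M, (TangentSpace I x) [⋀^Fin k]→ₗ[ℝ] ℝ

variable {I M}

/-- Pullback of a differential form along a map of manifolds, via the differential. -/
def mpullback {E' : Type*} [NormedAddCommGroup E'] [NormedSpace ℝ E']
    {H' : Type*} [TopologicalSpace H'] {I' : ModelWithCorners ℝ E' H'}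
    {M' : Type*} [TopologicalSpace M'] [ChartedSpace H' M'] {k : ℕ}
    (f : M' → M) (ω : MForm I M k) : MForm I' M' k :=
  fun x => (ω (f x)).compLinearMap (mfderiv I' I f x).toLinearMap

/-- A form is smooth when all of its pullbacks along smooth maps from Euclidean
spaces have smooth coefficients. -/
def IsSmoothForm {k : ℕ} (ω : MForm I M k) : Prop :=
  ∀ (n : ℕ) (p : Eucl n → M), ContMDiff 𝓘(ℝ, Eucl n) I (⊤ : ℕ∞) p →
    ∀ v : Fin k → Eucl n, ContDiff ℝ (⊤ : ℕ∞) fun u => mpullback (I' := 𝓘(ℝ, Eucl n)) p ω u v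

section action

variable {E' : Type*} [NormedAddCommGroup E'] [NormedSpace ℝ E']
  {H' : Type*} [TopologicalSpace H'] {I' : ModelWithCorners ℝ E' H'}
  {G : Type*} [TopologicalSpace G] [ChartedSpace H' G] [Group G] [LieGroup I' (⊤ : ℕ∞) G]
  [MulAction G M]

/-- `v` is tangent to the orbit `G ⬝ x` at `x`: it is in the image of the differential
at the identity of the orbit map `g ↦ g • x`. -/
def TangentToOrbit (I' : ModelWithCorners ℝ E' H') (G : Type*) [TopologicalSpace G]
    [ChartedSpace H' G] [Group G] [MulAction G M] (x : M) (v : TangentSpace I x) : Prop :=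
  ∃ ξ : TangentSpace I' (1 : G), v = mfderiv I' I (fun g : G => g • x) 1 ξ

/-- A form is horizontal when it vanishes whenever one of its arguments is tangent
to an orbit. -/
def Horizontal {k : ℕ} (ω : MForm I M k) : Prop :=
  ∀ (x : M) (v : TangentSpace I x), TangentToOrbit I' G x v →
    ∀ (vs : Fin k → TangentSpace I x) (i : Fin k), vs i = v → ω x vs = 0

/-- A form is invariant when it is preserved by the pullback along each `g • ·`. -/
def Invariant {k : ℕ} (ω : MForm I M k) : Prop :=
  ∀ g : G, mpullback (fun x : M => g • x) ω = ω

/-- A form is basic when it is invariant and horizontal. -/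
def Basic {k : ℕ} (ω : MForm I M k) : Prop :=
  Invariant (G := G) ω ∧ Horizontal (I' := I') (G := G) ω

end action

/-- Let a Lie group `G` act smoothly on a manifold `M`, let `α` be a
basic `k`-form on `M`, and let `p₁, p₂ : U → M` be smooth maps on an open `U ⊆ ℝⁿ`
with `p₂ u = a u • p₁ u` for a smooth `a : U → G`.  Then `p₁* α = p₂* α` on `U`. -/
theorem pullbacks_eq_of_smoothly_related
    {E' : Type*} [NormedAddCommGroup E'] [NormedSpace ℝ E']
    {H' : Type*} [TopologicalSpace H'] {I' : ModelWithCorners ℝ E' H'}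
    {G : Type*} [TopologicalSpace G] [ChartedSpace H' G] [Group G] [LieGroup I' (⊤ : ℕ∞) G]
    [MulAction G M]
    (hact : ContMDiff (I'.prod I) I (⊤ : ℕ∞) fun p : G × M => p.1 • p.2)
    {k : ℕ} (α : MForm I M k) (hsm : IsSmoothForm α)
    (hbasic : Basic (I' := I') (G := G) α)
    {n : ℕ} {U : Set (Eucl n)} (hU : IsOpen U)
    (p₁ p₂ : Eucl n → M) (hp₁ : ContMDiffOn 𝓘(ℝ, Eucl n) I (⊤ : ℕ∞) p₁ U)
    (hp₂ : ContMDiffOn 𝓘(ℝ, Eucl n) I (⊤ : ℕ∞) p₂ U)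
    (a : Eucl n → G) (ha : ContMDiffOn 𝓘(ℝ, Eucl n) I' (⊤ : ℕ∞) a U)
    (haction : ∀ u ∈ U, p₂ u = a u • p₁ u) :
    ∀ u ∈ U,
      mpullback (I' := 𝓘(ℝ, Eucl n)) p₁ α u = mpullback (I' := 𝓘(ℝ, Eucl n)) p₂ α u := by
  classical
  intro u hu
  obtain ⟨hinv, hhor⟩ := hbasic
  set g : G := a u with hg
  set x : M := p₁ u with hxdef
  have hx2 : p₂ u = g • x := haction u hu
  -- differentiability facts
  have haU : MDifferentiableAt 𝓘(ℝ, Eucl n) I' a u :=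
    (ha.contMDiffAt (hU.mem_nhds hu)).mdifferentiableAt (by simp)
  have hp1U : MDifferentiableAt 𝓘(ℝ, Eucl n) I p₁ u :=
    (hp₁.contMDiffAt (hU.mem_nhds hu)).mdifferentiableAt (by simp)
  have hactd : ∀ q : G × M, MDifferentiableAt (I'.prod I) I (fun p : G × M => p.1 • p.2) q :=
    fun q => (hact q).mdifferentiableAt (by simp)
  have horb : ∀ (x₀ : M) (g₀ : G), MDifferentiableAt I' I (fun h : G => h • x₀) g₀ := by
    intro x₀ g₀
    have h : (fun h : G => h • x₀) = (fun p : G × M => p.1 • p.2) ∘ (fun h : G => (h, x₀)) := rfl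
    rw [h]
    exact (hactd _).comp _ (mdifferentiableAt_id.prodMk mdifferentiableAt_const)
  set da := mfderiv 𝓘(ℝ, Eucl n) I' a u with hda
  set dp := mfderiv 𝓘(ℝ, Eucl n) I p₁ u with hdp
  set Dact := mfderiv (I'.prod I) I (fun p : G × M => p.1 • p.2) (g, x) with hDact
  -- derivative of p₂
  have heq : p₂ =ᶠ[nhds u] fun w => a w • p₁ w :=
    Filter.eventuallyEq_of_mem (hU.mem_nhds hu) fun w hw => haction w hw
  have hpair : MDifferentiableAt 𝓘(ℝ, Eucl n) (I'.prod I) (fun w => (a w, p₁ w)) u :=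
    haU.prodMk hp1U
  have hmf : mfderiv 𝓘(ℝ, Eucl n) I p₂ u =
      Dact.comp (da.prod dp) := by
    rw [heq.mfderiv_eq]
    have h : (fun w => a w • p₁ w) = (fun p : G × M => p.1 • p.2) ∘ fun w => (a w, p₁ w) := rfl
    rw [h, mfderiv_comp u (hactd _) hpair, haU.mfderiv_prod hp1U]; rfl
  -- partial derivatives
  have hdL : MDifferentiableAt I' (I'.prod I) (fun h : G => (h, x)) g :=
    mdifferentiableAt_id.prodMk mdifferentiableAt_const
  have hdR : MDifferentiableAt I (I'.prod I) (fun y : M => (g, y)) x :=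
    mdifferentiableAt_const.prodMk mdifferentiableAt_id
  have hpartL : mfderiv I' I (fun h : G => h • x) g =
      Dact.comp (ContinuousLinearMap.inl ℝ (TangentSpace I' g) (TangentSpace I x)) := by
    have h : (fun h : G => h • x) = (fun p : G × M => p.1 • p.2) ∘ (fun h : G => (h, x)) := rfl
    rw [h, mfderiv_comp g (hactd _) hdL, mfderiv_prod_left]
  have hpartR : mfderiv I I (fun y : M => g • y) x =
      Dact.comp (ContinuousLinearMap.inr ℝ (TangentSpace I' g) (TangentSpace I x)) := by
    have h : (fun y : M => g • y) = (fun p : G × M => p.1 • p.2) ∘ (fun y : M => (g, y)) := rfl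
    rw [h, mfderiv_comp x (hactd _) hdR, mfderiv_prod_right]
  have hdecomp : ∀ w : Eucl n, mfderiv 𝓘(ℝ, Eucl n) I p₂ u w =
      mfderiv I I (fun y : M => g • y) x (dp w) + mfderiv I' I (fun h : G => h • x) g (da w) := by
    intro w
    have e1 : mfderiv 𝓘(ℝ, Eucl n) I p₂ u w = Dact ((da.prod dp) w) := by
      rw [hmf]; rfl
    have e2 : (da.prod dp) w =
        ContinuousLinearMap.inr ℝ (TangentSpace I' g) (TangentSpace I x) (dp w) +
        ContinuousLinearMap.inl ℝ (TangentSpace I' g) (TangentSpace I x) (da w) := by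
      simp only [ContinuousLinearMap.prod_apply, ContinuousLinearMap.inl_apply,
        ContinuousLinearMap.inr_apply, Prod.mk_add_mk, add_zero, zero_add]; rfl
    have e3 : mfderiv I I (fun y : M => g • y) x (dp w) =
        Dact (ContinuousLinearMap.inr ℝ (TangentSpace I' g) (TangentSpace I x) (dp w)) := by
      rw [hpartR]; rfl
    have e4 : mfderiv I' I (fun h : G => h • x) g (da w) =
        Dact (ContinuousLinearMap.inl ℝ (TangentSpace I' g) (TangentSpace I x) (da w)) := by
      rw [hpartL]; rfl
    rw [e1, e2, e3, e4]; exact map_add Dact _ _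
  -- vertical vectors are tangent to the orbit at g • x
  have hvert : ∀ η : TangentSpace I' g,
      TangentToOrbit I' G (g • x) (mfderiv I' I (fun h : G => h • x) g η) := by
    intro η
    have hfun : (fun h : G => h • x) = (fun h' : G => h' • (g • x)) ∘ (fun h : G => h * g⁻¹) := by
      funext h
      simp [smul_smul]
    have hmulr : MDifferentiableAt I' I' (fun h : G => h * g⁻¹) g :=
      ((contMDiff_mul_right (n := ((⊤ : ℕ∞) : WithTop ℕ∞))).contMDiffAt).mdifferentiableAt (by simp)
    have hcomp2 : mfderiv I' I (fun h : G => h • x) g =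
        (mfderiv I' I (fun h' : G => h' • (g • x)) (g * g⁻¹)).comp
          (mfderiv I' I' (fun h : G => h * g⁻¹) g) := by
      rw [hfun, mfderiv_comp g (horb _ _) hmulr]
    rw [hcomp2]
    rw [mul_inv_cancel]
    exact ⟨mfderiv I' I' (fun h : G => h * g⁻¹) g η, rfl⟩
  -- main computation
  apply AlternatingMap.ext
  intro v
  simp only [mpullback, AlternatingMap.compLinearMap_apply, ContinuousLinearMap.coe_coe]
  set T : Fin k → TangentSpace I (g • x) :=
    fun i => mfderiv I I (fun y : M => g • y) x (dp (v i)) with hT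
  set W : Fin k → TangentSpace I (g • x) :=
    fun i => mfderiv I' I (fun h : G => h • x) g (da (v i)) with hW
  have hLHS : α (p₁ u) (fun i => mfderiv 𝓘(ℝ, Eucl n) I p₁ u (v i)) = α (g • x) T := by
    have h1 := congrFun (hinv g) x
    have h2 := congrArg (fun (β : (TangentSpace I x) [⋀^Fin k]→ₗ[ℝ] ℝ) =>
      β (fun i => dp (v i))) h1
    simp only [mpullback, AlternatingMap.compLinearMap_apply, ContinuousLinearMap.coe_coe] at h2
    exact h2.symm
  have hRHS : (fun i => mfderiv 𝓘(ℝ, Eucl n) I p₂ u (v i)) = T + W := by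
    funext i
    exact hdecomp (v i)
  have key : α (g • x) (T + W) = α (g • x) T := by
    rw [show α (g • x) (T + W) = (α (g • x)).toMultilinearMap (T + W) from rfl,
      MultilinearMap.map_add_univ]
    rw [Finset.sum_eq_single Finset.univ]
    · rw [Finset.piecewise_univ]
      rfl
    · intro s _ hs
      obtain ⟨i, hi⟩ : ∃ i, i ∉ s := by
        by_contra hcon
        push_neg at hcon
        exact hs (Finset.eq_univ_iff_forall.2 hcon)
      exact hhor (g • x) (W i) (hvert (da (v i))) _ i (Finset.piecewise_eq_of_notMem _ _ _ hi)
    · intro hcon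
      exact absurd (Finset.mem_univ _) hcon
  rw [hx2]
  exact hLHS.trans (key.symm.trans (congrArg (α (g • x)) hRHS).symm)
end
end

section
/- Let a finite group G act smoothly on a manifold M and let π : M → M/G be the quotient map. If α is a G-invariant differential k-form on M, and p₁, p₂ : U → M are smooth maps from an open subset U ⊆ ℝⁿ with π ∘ p₁ = π ∘ p₂, then p₁*α = p₂*α on U. -/
open scoped Manifold

noncomputable section

variable {E : Type*} [NormedAddCommGroup E] [NormedSpace ℝ E]
  {H : Type*} [TopologicalSpace H] (I : ModelWithCorners ℝ E H)
  (M : Type*) [TopologicalSpace M] [ChartedSpace H M] [IsManifold I (⊤ : ℕ∞) M]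

variable {I M}

/-- Let a finite group `G` act smoothly on a manifold `M` and let
`π : M → M/G` be the quotient map.  If `α` is a `G`-invariant differential `k`-form on
`M` and `p₁, p₂ : U → M` are smooth maps from an open `U ⊆ ℝⁿ` with `π ∘ p₁ = π ∘ p₂`
(i.e. for every `u ∈ U` some `g ∈ G` has `g • p₁ u = p₂ u`), then `p₁* α = p₂* α`
on `U`. -/
theorem pullbacks_eq_of_finite_group_orbit_equal
    (G : Type*) [Group G] [Finite G] [MulAction G M]
    (hact : ∀ g : G, ContMDiff I I (⊤ : ℕ∞) fun x : M => g • x)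
    {k : ℕ} (α : MForm I M k) (hsm : IsSmoothForm α)
    (hinv : ∀ g : G, mpullback (fun x : M => g • x) α = α)
    {n : ℕ} {U : Set (Eucl n)} (hU : IsOpen U)
    (p₁ p₂ : Eucl n → M) (hp₁ : ContMDiffOn 𝓘(ℝ, Eucl n) I (⊤ : ℕ∞) p₁ U)
    (hp₂ : ContMDiffOn 𝓘(ℝ, Eucl n) I (⊤ : ℕ∞) p₂ U)
    (horb : ∀ u ∈ U, ∃ g : G, g • p₁ u = p₂ u) :
    ∀ u ∈ U,
      mpullback (I' := 𝓘(ℝ, Eucl n)) p₁ α u = mpullback (I' := 𝓘(ℝ, Eucl n)) p₂ α u := by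
  intro u₀ hu₀
  obtain ⟨r, hr0, hrU⟩ := Metric.isOpen_iff.1 hU u₀ hu₀
  have hr2 : (0:ℝ) < r/2 := by positivity
  set f : ContDiffBump u₀ := ⟨r/2, r, hr2, half_lt_self hr0⟩ with hf
  set ψ : Eucl n → Eucl n := fun u => u₀ + f u • (u - u₀) with hψ
  have hψ_smooth : ContDiff ℝ (⊤ : ℕ∞) ψ := by
    exact contDiff_const.add (f.contDiff.smul (contDiff_id.sub contDiff_const))
  have hψ_mem : ∀ u, ψ u ∈ Metric.ball u₀ r := by
    intro u
    by_cases h : u ∈ Metric.ball u₀ r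
    · have h1 : ‖ψ u - u₀‖ = f u * ‖u - u₀‖ := by
        simp [hψ, norm_smul, abs_of_nonneg f.nonneg]
      have h2 : f u * ‖u - u₀‖ ≤ ‖u - u₀‖ :=
        mul_le_of_le_one_left (norm_nonneg _) f.le_one
      have h3 : ‖u - u₀‖ < r := by
        simpa [dist_eq_norm] using h
      simp only [Metric.mem_ball, dist_eq_norm]
      calc ‖ψ u - u₀‖ = f u * ‖u - u₀‖ := h1
        _ ≤ ‖u - u₀‖ := h2
        _ < r := h3
    · have h0 : f u = 0 := by
        have := f.support_eq
        by_contra h'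
        exact h (by rw [← this] at *; exact Function.mem_support.2 h')
      simp [hψ, h0, Metric.mem_ball, hr0]
  have hψ_id : ∀ u ∈ Metric.closedBall u₀ (r/2), ψ u = u := by
    intro u hu
    have : f u = 1 := f.one_of_mem_closedBall hu
    simp [hψ, this]
  set q : Eucl n → M := p₁ ∘ ψ with hqdef
  set q₂ : Eucl n → M := p₂ ∘ ψ with hq₂def
  have hψm : ContMDiff 𝓘(ℝ, Eucl n) 𝓘(ℝ, Eucl n) (⊤ : ℕ∞) ψ := contMDiff_iff_contDiff.2 hψ_smooth
  have hq : ContMDiff 𝓘(ℝ, Eucl n) I (⊤ : ℕ∞) q := fun u =>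
    ((hp₁ (ψ u) (hrU (hψ_mem u))).contMDiffAt (hU.mem_nhds (hrU (hψ_mem u)))).comp u (hψm u)
  have hq₂ : ContMDiff 𝓘(ℝ, Eucl n) I (⊤ : ℕ∞) q₂ := fun u =>
    ((hp₂ (ψ u) (hrU (hψ_mem u))).contMDiffAt (hU.mem_nhds (hrU (hψ_mem u)))).comp u (hψm u)
  set T : Set (Eucl n) :=
    {u | ∀ v : Fin k → Eucl n, mpullback (I' := 𝓘(ℝ, Eucl n)) q α u v
        = mpullback (I' := 𝓘(ℝ, Eucl n)) q₂ α u v} with hTdef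
  have hTclosed : IsClosed T := by
    have : T = ⋂ v : Fin k → Eucl n,
        {u | mpullback (I' := 𝓘(ℝ, Eucl n)) q α u v
          = mpullback (I' := 𝓘(ℝ, Eucl n)) q₂ α u v} := by
      ext u; simp [hTdef, Set.mem_iInter]
    rw [this]
    exact isClosed_iInter fun v =>
      isClosed_eq (hsm n q hq v).continuous (hsm n q₂ hq₂ v).continuous
  -- key: on an open set where `g • q = q₂`, the pulled back forms agree
  have key : ∀ (g : G) (O : Set (Eucl n)), IsOpen O → (∀ x ∈ O, g • q x = q₂ x) → O ⊆ T := by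
    intro g O hO hgO x hx v
    have heq : q₂ =ᶠ[nhds x] (fun y => g • y) ∘ q := by
      filter_upwards [hO.mem_nhds hx] with z hz
      exact (hgO z hz).symm
    have hder : mfderiv 𝓘(ℝ, Eucl n) I q₂ x
        = mfderiv 𝓘(ℝ, Eucl n) I ((fun y => g • y) ∘ q) x := heq.mfderiv_eq
    have hcomp : mfderiv 𝓘(ℝ, Eucl n) I ((fun y => g • y) ∘ q) x
        = ((mfderiv I I (fun y => g • y) (q x)).comp (mfderiv 𝓘(ℝ, Eucl n) I q x)) :=
      mfderiv_comp x ((hact g).mdifferentiableAt (by simp)) (hq.mdifferentiableAt (by simp))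
    have hval : q₂ x = g • q x := (hgO x hx).symm
    have hα := congrFun (hinv g) (q x)
    have hα' := DFunLike.congr_fun hα (fun i => (mfderiv 𝓘(ℝ, Eucl n) I q x) (v i))
    simp only [mpullback, AlternatingMap.compLinearMap_apply,
      ContinuousLinearMap.coe_coe] at hα'
    simp only [mpullback, AlternatingMap.compLinearMap_apply,
      ContinuousLinearMap.coe_coe]
    rw [hder, hcomp, hval]
    exact hα'.symm
  -- Baire argument: u₀ is in the closure of T
  have hmem : u₀ ∈ T := by
    refine hTclosed.closure_subset ?_
    rw [Metric.mem_closure_iff]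
    intro ε hε
    set ρ : ℝ := min ε (r/2) / 2 with hρdef
    have hρ0 : 0 < ρ := by positivity
    have hρr : ρ ≤ r/2 := by
      have := min_le_right ε (r/2); simp only [hρdef]; linarith
    have hρε : ρ < ε := by
      have := min_le_left ε (r/2); simp only [hρdef]; linarith
    set C : G → Set (Eucl n) := fun g => {u | g • q u = q₂ u} with hCdef
    set S : Option G → Set (Eucl n) := fun o =>
      o.elim (Metric.ball u₀ ρ)ᶜ
        (fun g => closure (C g ∩ Metric.closedBall u₀ ρ)) with hSdef
    have hSclosed : ∀ o, IsClosed (S o) := by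
      rintro (_ | g)
      · exact isClosed_compl_iff.2 Metric.isOpen_ball
      · exact isClosed_closure
    have hScover : ⋃ o, S o = Set.univ := by
      ext u
      simp only [Set.mem_iUnion, Set.mem_univ, iff_true]
      by_cases hu : u ∈ Metric.ball u₀ ρ
      · have hucb : u ∈ Metric.closedBall u₀ (r/2) :=
          Metric.closedBall_subset_closedBall hρr (Metric.ball_subset_closedBall hu)
        have huU : u ∈ U := hrU (Metric.ball_subset_ball (by linarith) hu)
        obtain ⟨g, hg⟩ := horb u huU
        refine ⟨some g, subset_closure ⟨?_, Metric.ball_subset_closedBall hu⟩⟩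
        show g • q u = q₂ u
        have hid := hψ_id u hucb
        simp only [hqdef, hq₂def, Function.comp_apply, hid]
        exact hg
      · exact ⟨none, hu⟩
    have hdense := dense_iUnion_interior_of_closed hSclosed hScover
    obtain ⟨w, hwI, hwB⟩ := hdense.exists_mem_open Metric.isOpen_ball
      ⟨u₀, Metric.mem_ball_self hρ0⟩
    obtain ⟨o, hwo⟩ := Set.mem_iUnion.1 hwI
    obtain (_ | g) := o
    · exact absurd hwB (interior_subset hwo : w ∈ (Metric.ball u₀ ρ)ᶜ)
    -- w ∈ interior (closure (C g ∩ cB)) ∩ ball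
    set P : Set (Eucl n) := interior (S (some g)) ∩ Metric.ball u₀ ρ with hPdef
    have hPopen : IsOpen P := isOpen_interior.inter Metric.isOpen_ball
    have hwP : w ∈ P := ⟨hwo, hwB⟩
    have hPsub : P ⊆ closure (C g ∩ Metric.closedBall u₀ ρ) :=
      fun x hx => interior_subset hx.1
    -- pick a point z of C g inside P
    obtain ⟨z, hzP, hzC, _⟩ :=
      (_root_.mem_closure_iff.1 (hPsub hwP)) P hPopen hwP
    have hcq : Continuous fun u => g • q u := (hact g).continuous.comp hq.continuous
    have hcq₂ : Continuous q₂ := hq₂.continuous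
    set y : M := q₂ z with hydef
    set e := extChartAt I y with hedef
    set N : Set (Eucl n) :=
      P ∩ ((fun u => g • q u) ⁻¹' e.source) ∩ (q₂ ⁻¹' e.source) with hNdef
    have hNopen : IsOpen N :=
      ((hPopen.inter ((isOpen_extChartAt_source y).preimage hcq)).inter
        ((isOpen_extChartAt_source y).preimage hcq₂))
    have hzN : z ∈ N := by
      refine ⟨⟨hzP, ?_⟩, ?_⟩
      · show g • q z ∈ e.source
        rw [show g • q z = y from hzC]
        exact mem_extChartAt_source y
      · exact mem_extChartAt_source y
    have hNC : ∀ x ∈ N, g • q x = q₂ x := by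
      intro x hx
      have hxcl : x ∈ closure (N ∩ (C g ∩ Metric.closedBall u₀ ρ)) :=
        hNopen.inter_closure ⟨hx, hPsub hx.1.1⟩
      obtain ⟨zs, hzs_mem, hzs_lim⟩ := mem_closure_iff_seq_limit.1 hxcl
      have hA1 : ContinuousAt (fun u => e (g • q u)) x :=
        ContinuousAt.comp (f := fun u => g • q u) (continuousAt_extChartAt' hx.1.2)
          hcq.continuousAt
      have hA2 : ContinuousAt (fun u => e (q₂ u)) x :=
        ContinuousAt.comp (f := q₂) (continuousAt_extChartAt' hx.2) hcq₂.continuousAt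
      have hlim1 : Filter.Tendsto (fun m => e (g • q (zs m))) Filter.atTop (nhds (e (g • q x))) :=
        (hA1.tendsto).comp hzs_lim
      have hlim2 : Filter.Tendsto (fun m => e (q₂ (zs m))) Filter.atTop (nhds (e (q₂ x))) :=
        (hA2.tendsto).comp hzs_lim
      have heqfun : (fun m => e (g • q (zs m))) = fun m => e (q₂ (zs m)) := by
        funext m
        exact congrArg e (hzs_mem m).2.1
      rw [heqfun] at hlim1
      have hEe : e (g • q x) = e (q₂ x) := tendsto_nhds_unique hlim1 hlim2
      exact (extChartAt I y).injOn hx.1.2 hx.2 hEe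
    have hzT : z ∈ T := key g N hNopen hNC hzN
    exact ⟨z, hzT, lt_trans (Metric.mem_ball'.1 hzP.2) hρε⟩
  -- transfer from q, q₂ back to p₁, p₂ at u₀
  have hballmem : Metric.ball u₀ (r/2) ∈ nhds u₀ :=
    Metric.ball_mem_nhds u₀ hr2
  have h1 : p₁ =ᶠ[nhds u₀] q := by
    filter_upwards [hballmem] with x hx
    simp only [hqdef, Function.comp_apply, hψ_id x (Metric.ball_subset_closedBall hx)]
  have h2 : p₂ =ᶠ[nhds u₀] q₂ := by
    filter_upwards [hballmem] with x hx
    simp only [hq₂def, Function.comp_apply, hψ_id x (Metric.ball_subset_closedBall hx)]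
  have hv1 : p₁ u₀ = q u₀ := h1.eq_of_nhds
  have hv2 : p₂ u₀ = q₂ u₀ := h2.eq_of_nhds
  have hd1 : mfderiv 𝓘(ℝ, Eucl n) I p₁ u₀ = mfderiv 𝓘(ℝ, Eucl n) I q u₀ := h1.mfderiv_eq
  have hd2 : mfderiv 𝓘(ℝ, Eucl n) I p₂ u₀ = mfderiv 𝓘(ℝ, Eucl n) I q₂ u₀ := h2.mfderiv_eq
  ext v
  have := hmem v
  simp only [mpullback, AlternatingMap.compLinearMap_apply, ContinuousLinearMap.coe_coe]
    at this ⊢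
  rw [hv1, hv2, hd1, hd2]
  exact this
end
end

section
/- Let G be a compact connected Lie group acting orthogonally and linearly on V = ℝᴺ. Let γ₁, γ₂ : ℝ → V be smooth curves with γ₁(0) = γ₂(0) = 0, and suppose for every t ∈ ℝ there exists g_t ∈ G (not necessarily depending continuously on t) with γ₂(t) = g_t · γ₁(t). Let ξ₁ = γ₁'(0) and ξ₂ = γ₂'(0). Then for every horizontal differential form α on V (with respect to the G-action), (ξ₂ − ξ₁) ⌟ α|₀ = 0. -/
open NormedSpace Filter Topology Asymptotics

set_option linter.unusedSectionVars false
set_option maxHeartbeats 1000000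

section AuxCompactGroup

variable {𝔸 : Type*} [NormedRing 𝔸] [NormedAlgebra ℝ 𝔸] [CompleteSpace 𝔸]

noncomputable def auxRatNormedAlgebra : NormedAlgebra ℚ 𝔸 := NormedAlgebra.restrictScalars ℚ ℝ 𝔸

attribute [local instance] auxRatNormedAlgebra

/-- The "Lie algebra" of a subset `H` of a Banach algebra: those elements whose one-parameter
exponential group is contained in `H`. -/
def lieSet (H : Set 𝔸) : Set 𝔸 := {η | ∀ t : ℝ, exp (t • η) ∈ H}

theorem lieSet_zero' {H : Set 𝔸} (hH1 : (1:𝔸) ∈ H) : (0:𝔸) ∈ lieSet H := by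
  intro t; simpa [smul_zero, exp_zero] using hH1

theorem lieSet_smul' {H : Set 𝔸} {η : 𝔸} (hη : η ∈ lieSet H) (c : ℝ) : c • η ∈ lieSet H := by
  intro t; simpa [smul_smul] using hη (t * c)

theorem lieSet_conj' {H : Set 𝔸} (hHmul : ∀ a ∈ H, ∀ b ∈ H, a * b ∈ H)
    {η : 𝔸} (hη : η ∈ lieSet H) {a b : 𝔸} (ha : a ∈ H) (hb : b ∈ H)
    (hab : a * b = 1) (hba : b * a = 1) : a * η * b ∈ lieSet H := by
  intro t
  have h1 : t • (a * η * b) = a * (t • η) * b := by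
    rw [mul_smul_comm, smul_mul_assoc]
  have h2 := exp_units_conj (⟨a, b, hab, hba⟩ : 𝔸ˣ) (t • η)
  simp only [Units.inv_mk] at h2
  rw [h1, h2]
  exact hHmul _ (hHmul _ ha _ (hη t)) _ hb

theorem myExpEquiv : HasStrictFDerivAt (exp : 𝔸 → 𝔸)
    ((ContinuousLinearEquiv.refl ℝ 𝔸 : 𝔸 ≃L[ℝ] 𝔸) : 𝔸 →L[ℝ] 𝔸) 0 := by
  exact (hasStrictFDerivAt_exp_zero (𝕂 := ℝ) (𝔸 := 𝔸))

theorem expCurve_hasDerivAt (η ζ : 𝔸) :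
    HasDerivAt (fun s : ℝ => exp (s • η) * exp (s • ζ)) (η + ζ) 0 := by
  have h1 : HasDerivAt (fun s : ℝ => exp (s • η)) η 0 := by
    have hg : HasDerivAt (fun s : ℝ => s • η) ((1:ℝ) • η) 0 := (hasDerivAt_id 0).smul_const η
    have he : HasFDerivAt (exp) (1 : 𝔸 →L[ℝ] 𝔸) ((0:ℝ) • η) := by
      simpa using (hasFDerivAt_exp_zero (𝕂 := ℝ) (𝔸 := 𝔸))
    have := he.comp_hasDerivAt (x := (0:ℝ)) (f := fun s : ℝ => s • η) (by simpa using hg)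
    simpa [Function.comp_def] using this
  have h2 : HasDerivAt (fun s : ℝ => exp (s • ζ)) ζ 0 := by
    have hg : HasDerivAt (fun s : ℝ => s • ζ) ((1:ℝ) • ζ) 0 := (hasDerivAt_id 0).smul_const ζ
    have he : HasFDerivAt (exp) (1 : 𝔸 →L[ℝ] 𝔸) ((0:ℝ) • ζ) := by
      simpa using (hasFDerivAt_exp_zero (𝕂 := ℝ) (𝔸 := 𝔸))
    have := he.comp_hasDerivAt (x := (0:ℝ)) (f := fun s : ℝ => s • ζ) (by simpa using hg)
    simpa [Function.comp_def] using this
  have := h1.mul h2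
  simpa [exp_zero, Pi.mul_def] using this


theorem exp_mem_of_seq {H : Set 𝔸} (hHcl : IsClosed H) (hH1 : (1:𝔸) ∈ H)
    (hHmul : ∀ a ∈ H, ∀ b ∈ H, a * b ∈ H)
    {h : ℕ → 𝔸} (hmem : ∀ n, h n ∈ H) {x : 𝔸}
    (hlim : Tendsto (fun n : ℕ => (n:ℝ) • (h n - 1)) atTop (𝓝 x)) : exp x ∈ H := by
  classical
  set log : 𝔸 → 𝔸 := (myExpEquiv (𝔸 := 𝔸)).localInverse _ _ _ with hlogdef
  have hlog1 : log 1 = 0 := by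
    have := (myExpEquiv (𝔸 := 𝔸)).localInverse_apply_image
    simpa [exp_zero] using this
  have hlogderiv : HasStrictFDerivAt log
      ((ContinuousLinearEquiv.refl ℝ 𝔸).symm : 𝔸 →L[ℝ] 𝔸) (exp (0:𝔸)) :=
    (myExpEquiv (𝔸 := 𝔸)).to_localInverse
  rw [exp_zero] at hlogderiv
  -- h n → 1
  have hh1 : Tendsto h atTop (𝓝 1) := by
    have h0 : Tendsto (fun n : ℕ => ((n:ℝ))⁻¹ • ((n:ℝ) • (h n - 1))) atTop (𝓝 ((0:ℝ) • x)) :=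
      (tendsto_inv_atTop_nhds_zero_nat.smul hlim)
    have : ∀ᶠ n : ℕ in atTop, ((n:ℝ))⁻¹ • ((n:ℝ) • (h n - 1)) = h n - 1 := by
      filter_upwards [eventually_ge_atTop 1] with n hn
      rw [smul_smul, inv_mul_cancel₀ (by positivity), one_smul]
    have h2 : Tendsto (fun n : ℕ => h n - 1) atTop (𝓝 0) := by
      rw [← zero_smul ℝ x]
      exact h0.congr' this
    simpa using h2.add_const 1
  -- eventually exp (log (h n)) = h n
  have hrinv : ∀ᶠ n in atTop, exp (log (h n)) = h n := by
    have := (myExpEquiv (𝔸 := 𝔸)).eventually_right_inverse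
    rw [exp_zero] at this
    exact hh1.eventually this
  -- littleO
  have hlo : (fun y => log y - (y - 1)) =o[𝓝 (1:𝔸)] fun y => y - 1 := by
    have := hlogderiv.hasFDerivAt.isLittleO
    simpa [hlog1] using this
  have hlo2 : (fun n : ℕ => (n:ℝ) • (log (h n) - (h n - 1))) =o[atTop] fun n : ℕ => (n:ℝ) • (h n - 1) :=
    (isBigO_refl (fun n : ℕ => (n:ℝ)) atTop).smul_isLittleO (hlo.comp_tendsto hh1)
  have hO1 : (fun n : ℕ => (n:ℝ) • (h n - 1)) =O[atTop] (fun _ => (1:ℝ)) := hlim.isBigO_one ℝ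
  have hlo3 : Tendsto (fun n : ℕ => (n:ℝ) • (log (h n) - (h n - 1))) atTop (𝓝 0) := by
    have := hlo2.trans_isBigO hO1
    rwa [isLittleO_one_iff] at this
  have hloglim : Tendsto (fun n : ℕ => (n:ℝ) • log (h n)) atTop (𝓝 x) := by
    have := hlim.add hlo3
    simp only [smul_sub] at this ⊢
    simpa using this
  have hexp : Tendsto (fun n : ℕ => exp ((n:ℝ) • log (h n))) atTop (𝓝 (exp x)) :=
    (exp_continuous.tendsto x).comp hloglim
  refine hHcl.mem_of_tendsto hexp ?_
  filter_upwards [hrinv] with n hn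
  have hpow : exp ((n:ℝ) • log (h n)) = (h n) ^ n := by
    rw [Nat.cast_smul_eq_nsmul ℝ n (log (h n)), exp_nsmul, hn]
  rw [hpow]
  have : ∀ m : ℕ, (h n) ^ m ∈ H := by
    intro m
    induction m with
    | zero => simpa using hH1
    | succ m ih => rw [pow_succ]; exact hHmul _ ih _ (hmem n)
  exact this n

theorem lieSet_add' {H : Set 𝔸} (hHcl : IsClosed H) (hH1 : (1:𝔸) ∈ H)
    (hHmul : ∀ a ∈ H, ∀ b ∈ H, a * b ∈ H)
    {η ζ : 𝔸} (hη : η ∈ lieSet H) (hζ : ζ ∈ lieSet H) : η + ζ ∈ lieSet H := by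
  intro t
  rcases eq_or_ne t 0 with rfl | ht
  · simpa [exp_zero] using hH1
  set f : ℝ → 𝔸 := fun s => exp (s • η) * exp (s • ζ) with hf
  have hf0 : f 0 = 1 := by simp [hf, exp_zero]
  have hder := expCurve_hasDerivAt η ζ
  have hslope : Tendsto (slope f 0) (𝓝[≠] 0) (𝓝 (η + ζ)) :=
    hasDerivAt_iff_tendsto_slope.mp hder
  have hseq : Tendsto (fun n : ℕ => t / (n:ℝ)) atTop (𝓝[≠] (0:ℝ)) := by
    refine tendsto_nhdsWithin_of_tendsto_nhds_of_eventually_within _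
      (tendsto_const_div_atTop_nhds_zero_nat t) ?_
    filter_upwards [eventually_ge_atTop 1] with n hn
    have hn0 : (n:ℝ) ≠ 0 := by positivity
    simp [Set.mem_compl_iff, div_ne_zero ht hn0]
  have hcomp : Tendsto (fun n : ℕ => t • slope f 0 (t / (n:ℝ))) atTop (𝓝 (t • (η + ζ))) :=
    (hslope.comp hseq).const_smul t
  have hmemseq : ∀ n : ℕ, f (t / (n:ℝ)) ∈ H :=
    fun n => hHmul _ (hη _) _ (hζ _)
  have key : Tendsto (fun n : ℕ => (n:ℝ) • (f (t / (n:ℝ)) - 1)) atTop (𝓝 (t • (η + ζ))) := by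
    refine hcomp.congr' ?_
    filter_upwards [eventually_ge_atTop 1] with n hn
    have hn0 : (n:ℝ) ≠ 0 := by positivity
    rw [slope_def_module, hf0, sub_zero, smul_smul]
    congr 1
    field_simp
  exact exp_mem_of_seq hHcl hH1 hHmul hmemseq key

theorem exp_local_surj [FiniteDimensional ℝ 𝔸] {H : Set 𝔸} (hHcl : IsClosed H)
    (hH1 : (1:𝔸) ∈ H) (hHmul : ∀ a ∈ H, ∀ b ∈ H, a * b ∈ H)
    (hHinv : ∀ a ∈ H, ∃ b ∈ H, a * b = 1 ∧ b * a = 1)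
    (W : Submodule ℝ 𝔸) (hW : (W : Set 𝔸) = lieSet H) :
    ∃ ε > 0, ∀ a ∈ H, ‖a - 1‖ < ε → ∃ η ∈ lieSet H, exp η = a := by
  classical
  haveI : ProperSpace 𝔸 := FiniteDimensional.proper ℝ 𝔸
  obtain ⟨W', hcompl⟩ := Submodule.exists_isCompl W
  set e : (W × W') ≃L[ℝ] 𝔸 :=
    (Submodule.prodEquivOfIsCompl W W' hcompl).toContinuousLinearEquiv with he
  set L1 : (W × W') →L[ℝ] 𝔸 := W.subtypeL.comp (ContinuousLinearMap.fst ℝ W W') with hL1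
  set L2 : (W × W') →L[ℝ] 𝔸 := W'.subtypeL.comp (ContinuousLinearMap.snd ℝ W W') with hL2
  set F : W × W' → 𝔸 := fun p => exp (p.1 : 𝔸) * exp (p.2 : 𝔸) with hFdef
  have hF : HasStrictFDerivAt F (e : (W × W') →L[ℝ] 𝔸) 0 := by
    have h1 : HasStrictFDerivAt (fun p : W × W' => exp (p.1 : 𝔸))
        ((1 : 𝔸 →L[ℝ] 𝔸).comp L1) 0 := by
      exact (hasStrictFDerivAt_exp_zero (𝕂 := ℝ)).comp 0 L1.hasStrictFDerivAt
    have h2 : HasStrictFDerivAt (fun p : W × W' => exp (p.2 : 𝔸))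
        ((1 : 𝔸 →L[ℝ] 𝔸).comp L2) 0 := by
      exact (hasStrictFDerivAt_exp_zero (𝕂 := ℝ)).comp 0 L2.hasStrictFDerivAt
    have hmul := h1.mul' h2
    refine hmul.congr_fderiv ?_
    refine ContinuousLinearMap.ext fun p => ?_
    simp [he, hL1, hL2, Prod.fst_zero, Prod.snd_zero, exp_zero,
      Submodule.coe_prodEquivOfIsCompl', add_comm]
  have hF0 : F 0 = 1 := by simp [hFdef, exp_zero]
  by_contra hcon
  push_neg at hcon
  have hcs : ∀ n : ℕ, ∃ a ∈ H, ‖a - 1‖ < 1 / ((n:ℝ)+1) ∧ ∀ η ∈ lieSet H, exp η ≠ a := by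
    intro n
    exact hcon _ (by positivity)
  choose a haH hanorm hbad using hcs
  have hatend : Tendsto a atTop (𝓝 (1:𝔸)) := by
    rw [tendsto_iff_norm_sub_tendsto_zero]
    refine squeeze_zero (fun n => norm_nonneg _) (fun n => (hanorm n).le) ?_
    exact tendsto_one_div_add_atTop_nhds_zero_nat
  set linv : 𝔸 → W × W' := hF.localInverse _ _ _ with hlinvdef
  have hlinv1 : linv 1 = 0 := by
    have := hF.localInverse_apply_image
    rwa [hF0] at this
  have hlcont : ContinuousAt linv 1 := by
    have := hF.localInverse_continuousAt
    rwa [hF0] at this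
  have htendp : Tendsto (fun n => linv (a n)) atTop (𝓝 (0 : W × W')) := by
    have := (hlcont.tendsto).comp hatend
    rwa [hlinv1] at this
  have heqF : ∀ᶠ n in atTop, F (linv (a n)) = a n := by
    have := hF.eventually_right_inverse
    rw [hF0] at this
    exact hatend.eventually this
  set x : ℕ → W := fun n => (linv (a n)).1 with hxdef
  set y : ℕ → W' := fun n => (linv (a n)).2 with hydef
  have hxlie : ∀ n, ((x n : 𝔸)) ∈ lieSet H := by
    intro n; rw [← hW]; exact (x n).2
  have hexpx : ∀ n, ∀ t : ℝ, exp (t • (x n : 𝔸)) ∈ H := fun n => hxlie n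
  have hy0 : Tendsto (fun n => ((y n : 𝔸))) atTop (𝓝 0) := by
    have : Tendsto y atTop (𝓝 (0 : W')) := (continuous_snd.tendsto _).comp htendp
    have h2 := ((W'.subtypeL : W' →L[ℝ] 𝔸).continuous.tendsto _).comp this
    simpa [Function.comp_def] using h2
  have hinvmul : ∀ n, exp (-(x n : 𝔸)) * exp ((x n : 𝔸)) = 1 := by
    intro n
    rw [← exp_add_of_commute (Commute.neg_left rfl), neg_add_cancel, exp_zero]
  have hyH : ∀ᶠ n in atTop, exp ((y n : 𝔸)) ∈ H := by
    filter_upwards [heqF] with n hn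
    have hxinH : exp (-(x n : 𝔸)) ∈ H := by
      have := hexpx n (-1)
      simpa using this
    have : exp ((y n : 𝔸)) = exp (-(x n : 𝔸)) * a n := by
      rw [← hn]
      show exp ((y n : 𝔸)) = exp (-(x n:𝔸)) * (exp ((x n:𝔸)) * exp ((y n:𝔸)))
      rw [← mul_assoc, hinvmul n, one_mul]
    rw [this]
    exact hHmul _ hxinH _ (haH n)
  have hyne : ∀ᶠ n in atTop, ((y n : 𝔸)) ≠ 0 := by
    filter_upwards [heqF] with n hn
    intro hy
    refine hbad n (x n) (hxlie n) ?_
    rw [← hn]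
    show exp ((x n:𝔸)) = exp ((x n:𝔸)) * exp ((y n:𝔸))
    rw [hy, exp_zero, mul_one]
  obtain ⟨N₀, hN₀⟩ := eventually_atTop.1 ((heqF.and (hyne.and hyH)))
  set z : ℕ → W' := fun n => y (n + N₀) with hzdef
  have hzne : ∀ n, ((z n : 𝔸)) ≠ 0 := fun n => (hN₀ (n + N₀) (Nat.le_add_left _ _)).2.1
  have hzH : ∀ n, exp ((z n : 𝔸)) ∈ H := fun n => (hN₀ (n + N₀) (Nat.le_add_left _ _)).2.2
  have hz0 : Tendsto (fun n => ((z n : 𝔸))) atTop (𝓝 0) :=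
    hy0.comp (tendsto_add_atTop_nat N₀)
  set u : ℕ → 𝔸 := fun n => (‖(z n : 𝔸)‖)⁻¹ • ((z n : 𝔸)) with hudef
  have husphere : ∀ n, u n ∈ Metric.sphere (0:𝔸) 1 := by
    intro n
    have hz : ‖(z n : 𝔸)‖ ≠ 0 := norm_ne_zero_iff.2 (hzne n)
    rw [mem_sphere_zero_iff_norm, hudef]
    simp [norm_smul, abs_of_nonneg (norm_nonneg _), inv_mul_cancel₀ hz]
  obtain ⟨uInf, huInfS, φ, hφ, hulim⟩ :=
    (isCompact_sphere (0:𝔸) 1).tendsto_subseq husphere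
  have hznorm0 : Tendsto (fun n => ‖(z (φ n) : 𝔸)‖) atTop (𝓝 0) := by
    have := (hz0.comp hφ.tendsto_atTop).norm
    simpa using this
  have hzu : ∀ n, ((z n : 𝔸)) = ‖(z n : 𝔸)‖ • u n := by
    intro n
    rw [hudef]
    rw [smul_smul, mul_inv_cancel₀ (norm_ne_zero_iff.2 (hzne n)), one_smul]
  have hnonneg : ∀ t : ℝ, 0 ≤ t → exp (t • uInf) ∈ H := by
    intro t ht
    set m : ℕ → ℕ := fun n => ⌊t / ‖(z (φ n) : 𝔸)‖⌋₊ with hmdef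
    have hzpos : ∀ n, (0:ℝ) < ‖(z (φ n) : 𝔸)‖ :=
      fun n => norm_pos_iff.2 (hzne (φ n))
    have hup : ∀ n, (m n : ℝ) * ‖(z (φ n) : 𝔸)‖ ≤ t := by
      intro n
      have := Nat.floor_le (div_nonneg ht (hzpos n).le)
      calc (m n : ℝ) * ‖(z (φ n) : 𝔸)‖ ≤ (t / ‖(z (φ n) : 𝔸)‖) * ‖(z (φ n) : 𝔸)‖ := by
            exact mul_le_mul_of_nonneg_right this (hzpos n).le
        _ = t := div_mul_cancel₀ t (hzpos n).ne'
    have hlow : ∀ n, t - ‖(z (φ n) : 𝔸)‖ < (m n : ℝ) * ‖(z (φ n) : 𝔸)‖ := by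
      intro n
      have h1 : t / ‖(z (φ n) : 𝔸)‖ < (m n : ℝ) + 1 := Nat.lt_floor_add_one _
      have h2 := (div_lt_iff₀ (hzpos n)).1 h1
      rw [add_mul, one_mul] at h2
      linarith
    have hscal : Tendsto (fun n => (m n : ℝ) * ‖(z (φ n) : 𝔸)‖) atTop (𝓝 t) := by
      have hlow' : Tendsto (fun n => t - ‖(z (φ n) : 𝔸)‖) atTop (𝓝 (t - 0)) :=
        tendsto_const_nhds.sub hznorm0
      rw [sub_zero] at hlow'
      exact tendsto_of_tendsto_of_tendsto_of_le_of_le hlow' tendsto_const_nhds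
        (fun n => (hlow n).le) hup
    have hsm : Tendsto (fun n => (m n : ℝ) • ((z (φ n) : 𝔸))) atTop (𝓝 (t • uInf)) := by
      have heq : ∀ n, (m n : ℝ) • ((z (φ n) : 𝔸)) = ((m n : ℝ) * ‖(z (φ n) : 𝔸)‖) • u (φ n) := by
        intro n
        rw [mul_smul, ← hzu (φ n)]
      rw [show (fun n => (m n : ℝ) • ((z (φ n) : 𝔸))) = fun n => ((m n : ℝ) * ‖(z (φ n) : 𝔸)‖) • u (φ n) from funext heq]
      exact hscal.smul hulim
    have hexpmem : ∀ n, exp ((m n : ℝ) • ((z (φ n) : 𝔸))) ∈ H := by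
      intro n
      rw [Nat.cast_smul_eq_nsmul ℝ (m n), exp_nsmul]
      have := hzH (φ n)
      generalize exp ((z (φ n):𝔸)) = b at this
      clear_value m
      induction m n with
      | zero => simpa using hH1
      | succ k ih => rw [pow_succ]; exact hHmul _ ih _ this
    exact hHcl.mem_of_tendsto ((exp_continuous.tendsto _).comp hsm)
      (Eventually.of_forall hexpmem)
  have hulie : uInf ∈ lieSet H := by
    intro t
    rcases le_or_gt 0 t with ht | ht
    · exact hnonneg t ht
    · obtain ⟨b, hbH, hb1, hb2⟩ := hHinv _ (hnonneg (-t) (by linarith))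
      have hcomm : exp (t • uInf) * exp ((-t) • uInf) = 1 := by
        rw [← exp_add_of_commute]
        · rw [show t • uInf + (-t) • uInf = 0 by rw [← add_smul]; simp, exp_zero]
        · exact (Commute.refl uInf).smul_left t |>.smul_right (-t)
      have : exp (t • uInf) = b := by
        calc exp (t • uInf) = exp (t • uInf) * (exp ((-t) • uInf) * b) := by rw [hb1, mul_one]
          _ = (exp (t • uInf) * exp ((-t) • uInf)) * b := by rw [mul_assoc]
          _ = b := by rw [hcomm, one_mul]
      rw [this]
      exact hbH
  have huW : uInf ∈ W := by rw [← SetLike.mem_coe, hW]; exact hulie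
  have huW' : uInf ∈ W' := by
    have hcl : IsClosed (W' : Set 𝔸) := W'.closed_of_finiteDimensional
    refine hcl.mem_of_tendsto hulim (Eventually.of_forall ?_)
    intro n
    exact W'.smul_mem _ (z (φ n)).2
  have : uInf = 0 := Submodule.disjoint_def.mp hcompl.disjoint uInf huW huW'
  rw [mem_sphere_zero_iff_norm, this] at huInfS
  simp at huInfS

theorem exp_sub_one_factor [FiniteDimensional ℝ 𝔸] (η : 𝔸) :
    ∃ c : 𝔸, exp η - 1 = η * c := by
  set R : Submodule ℝ 𝔸 := LinearMap.range (LinearMap.mulLeft ℝ η) with hR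
  have hmem : exp η - 1 ∈ R := by
    have hsum : HasSum (fun n : ℕ => ((n.factorial : ℝ))⁻¹ • η ^ n) (exp η) := by
      have := expSeries_hasSum_exp (𝕂 := ℝ) η
      simpa [expSeries_apply_eq] using this
    have htend := hsum.tendsto_sum_nat
    have htend' : Tendsto (fun M => (∑ n ∈ Finset.range M, ((n.factorial : ℝ))⁻¹ • η ^ n) - 1)
        atTop (𝓝 (exp η - 1)) := htend.sub_const 1
    refine R.closed_of_finiteDimensional.mem_of_tendsto htend' ?_
    filter_upwards [eventually_ge_atTop 1] with M hM
    have hsplit : (∑ n ∈ Finset.range M, ((n.factorial : ℝ))⁻¹ • η ^ n)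
        = 1 + ∑ n ∈ Finset.Ico 1 M, ((n.factorial : ℝ))⁻¹ • η ^ n := by
      rw [Finset.range_eq_Ico, Finset.sum_eq_sum_Ico_succ_bot (by omega)]
      simp
    rw [hsplit, add_sub_cancel_left]
    refine Submodule.sum_mem R ?_
    intro n hn
    rw [Finset.mem_Ico] at hn
    refine ⟨((n.factorial : ℝ))⁻¹ • η ^ (n - 1), ?_⟩
    simp only [LinearMap.mulLeft_apply]
    rw [mul_smul_comm, ← pow_succ']
    congr 2
    omega
  obtain ⟨c, hc⟩ := hmem
  refine ⟨c, ?_⟩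
  rw [← hc, LinearMap.mulLeft_apply]

theorem sub_one_mem_span [FiniteDimensional ℝ 𝔸] {H : Set 𝔸}
    (hHcl : IsClosed H) (hHconn : IsPreconnected H) (hH1 : (1:𝔸) ∈ H)
    (hHmul : ∀ a ∈ H, ∀ b ∈ H, a * b ∈ H)
    (hHinv : ∀ a ∈ H, ∃ b ∈ H, a * b = 1 ∧ b * a = 1) :
    ∀ a ∈ H, a - 1 ∈ Submodule.span ℝ {m : 𝔸 | ∃ η ∈ lieSet H, ∃ c : 𝔸, m = η * c} := by
  classical
  set K : Submodule ℝ 𝔸 :=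
    Submodule.span ℝ {m : 𝔸 | ∃ η ∈ lieSet H, ∃ c : 𝔸, m = η * c} with hK
  set W : Submodule ℝ 𝔸 :=
    { carrier := lieSet H
      zero_mem' := lieSet_zero' hH1
      add_mem' := fun h1 h2 => lieSet_add' hHcl hH1 hHmul h1 h2
      smul_mem' := fun c x hx => lieSet_smul' hx c } with hWdef
  obtain ⟨ε, hε, hloc⟩ := exp_local_surj hHcl hH1 hHmul hHinv W rfl
  -- K is stable under left multiplication by elements of H
  have hKmul : ∀ g ∈ H, ∀ m ∈ K, g * m ∈ K := by
    intro g hg m hm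
    obtain ⟨g', hg'H, hgg', hg'g⟩ := hHinv g hg
    induction hm using Submodule.span_induction with
    | mem w hw =>
      obtain ⟨η, hη, c, rfl⟩ := hw
      refine Submodule.subset_span ⟨g * η * g', lieSet_conj' hHmul hη hg hg'H hgg' hg'g,
        g * c, ?_⟩
      calc g * (η * c) = g * η * c := by rw [mul_assoc]
        _ = g * η * (g' * g) * c := by rw [hg'g, mul_one]
        _ = (g * η * g') * (g * c) := by noncomm_ring
    | zero => simpa using K.zero_mem
    | add w₁ w₂ _ _ h1 h2 =>
      rw [mul_add]; exact K.add_mem h1 h2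
    | smul c w _ h =>
      rw [mul_smul_comm]; exact K.smul_mem c h
  -- members of the image of exp are in S
  have hSexp : ∀ η ∈ lieSet H, exp η - 1 ∈ K := by
    intro η hη
    obtain ⟨c, hc⟩ := exp_sub_one_factor η
    rw [hc]
    exact Submodule.subset_span ⟨η, hη, c, rfl⟩
  -- the inverse function on H
  choose inv hinvH hinv1 hinv2 using hHinv
  -- local property of S
  set S : Set 𝔸 := {g | g ∈ H ∧ g - 1 ∈ K} with hS
  have hSmul : ∀ g ∈ S, ∀ h ∈ S, g * h ∈ S := by
    rintro g ⟨hgH, hgK⟩ h ⟨hhH, hhK⟩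
    refine ⟨hHmul _ hgH _ hhH, ?_⟩
    have : g * h - 1 = g * (h - 1) + (g - 1) := by noncomm_ring
    rw [this]
    exact K.add_mem (hKmul g hgH _ hhK) hgK
  -- neighborhood transfer
  have hkey : ∀ g (hg : g ∈ H), ∀ b ∈ H,
      ‖b - g‖ < ε / (‖inv g hg‖ + 1) → (g ∈ S ↔ b ∈ S) := by
    intro g hg b hb hball
    set g' := inv g hg
    have hg'H := hinvH g hg
    have hgg' := hinv1 g hg
    have hg'g := hinv2 g hg
    have hcH : g' * b ∈ H := hHmul _ hg'H _ hb
    have hcnorm : ‖g' * b - 1‖ < ε := by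
      have h1 : g' * b - 1 = g' * (b - g) := by
        rw [mul_sub, hg'g]
      rw [h1]
      calc ‖g' * (b - g)‖ ≤ ‖g'‖ * ‖b - g‖ := norm_mul_le _ _
        _ ≤ (‖g'‖ + 1) * ‖b - g‖ := by nlinarith [norm_nonneg (b - g), norm_nonneg g']
        _ < (‖g'‖ + 1) * (ε / (‖g'‖ + 1)) := by
            have hpos : (0:ℝ) < ‖g'‖ + 1 := by positivity
            exact mul_lt_mul_of_pos_left hball hpos
        _ = ε := by field_simp
    obtain ⟨η, hη, hexpη⟩ := hloc _ hcH hcnorm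
    have hbgc : b = g * exp η := by
      rw [hexpη, ← mul_assoc, hgg', one_mul]
    have hexpmem : exp η ∈ S := ⟨by simpa using hη 1, hSexp η hη⟩
    have hneglie : -η ∈ lieSet H := by
      simpa [neg_smul, one_smul] using lieSet_smul' hη (-1)
    have hexpneg : exp (-η) ∈ S := ⟨by simpa using hneglie 1, hSexp _ hneglie⟩
    constructor
    · intro hgS
      rw [hbgc]
      exact hSmul _ hgS _ hexpmem
    · intro hbS
      have hgbe : g = b * exp (-η) := by
        rw [hbgc, mul_assoc, ← exp_add_of_commute (Commute.neg_right rfl), add_neg_cancel,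
          exp_zero, mul_one]
      rw [hgbe]
      exact hSmul _ hbS _ hexpneg
  -- clopen argument
  set U₁ : Set 𝔸 := ⋃ (g : 𝔸) (hg : g ∈ H) (_ : g ∈ S), Metric.ball g (ε / (‖inv g hg‖ + 1))
    with hU₁
  set U₂ : Set 𝔸 := ⋃ (g : 𝔸) (hg : g ∈ H) (_ : g ∉ S), Metric.ball g (ε / (‖inv g hg‖ + 1))
    with hU₂
  have hU₁open : IsOpen U₁ := by
    refine isOpen_iUnion fun g => isOpen_iUnion fun hg => isOpen_iUnion fun _ => Metric.isOpen_ball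
  have hU₂open : IsOpen U₂ := by
    refine isOpen_iUnion fun g => isOpen_iUnion fun hg => isOpen_iUnion fun _ => Metric.isOpen_ball
  have hcover : H ⊆ U₁ ∪ U₂ := by
    intro g hg
    have hpos : (0:ℝ) < ε / (‖inv g hg‖ + 1) := by positivity
    by_cases hgS : g ∈ S
    · exact Or.inl (Set.mem_iUnion.2 ⟨g, Set.mem_iUnion.2 ⟨hg, Set.mem_iUnion.2 ⟨hgS,
        Metric.mem_ball_self hpos⟩⟩⟩)
    · exact Or.inr (Set.mem_iUnion.2 ⟨g, Set.mem_iUnion.2 ⟨hg, Set.mem_iUnion.2 ⟨hgS,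
        Metric.mem_ball_self hpos⟩⟩⟩)
  have hHU₁ : ∀ b ∈ H ∩ U₁, b ∈ S := by
    rintro b ⟨hbH, hbU⟩
    obtain ⟨g, hg, hgS, hball⟩ : ∃ g, ∃ (hg : g ∈ H), g ∈ S ∧
        b ∈ Metric.ball g (ε / (‖inv g hg‖ + 1)) := by
      simpa [hU₁, Set.mem_iUnion] using hbU
    rw [Metric.mem_ball, dist_eq_norm] at hball
    exact (hkey g hg b hbH hball).1 hgS
  have hHU₂ : ∀ b ∈ H ∩ U₂, b ∉ S := by
    rintro b ⟨hbH, hbU⟩ hbS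
    obtain ⟨g, hg, hgS, hball⟩ : ∃ g, ∃ (hg : g ∈ H), g ∉ S ∧
        b ∈ Metric.ball g (ε / (‖inv g hg‖ + 1)) := by
      simpa [hU₂, Set.mem_iUnion] using hbU
    rw [Metric.mem_ball, dist_eq_norm] at hball
    exact hgS ((hkey g hg b hbH hball).2 hbS)
  -- 1 ∈ S
  have h1S : (1:𝔸) ∈ S := ⟨hH1, by simpa using K.zero_mem⟩
  -- conclude S = H
  intro a ha
  by_contra haK
  have haS : a ∉ S := fun h => haK h.2
  have hne₁ : (H ∩ U₁).Nonempty := by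
    refine ⟨1, hH1, ?_⟩
    have hpos : (0:ℝ) < ε / (‖inv 1 hH1‖ + 1) := by positivity
    exact Set.mem_iUnion.2 ⟨1, Set.mem_iUnion.2 ⟨hH1, Set.mem_iUnion.2 ⟨h1S,
      Metric.mem_ball_self hpos⟩⟩⟩
  have hne₂ : (H ∩ U₂).Nonempty := by
    refine ⟨a, ha, ?_⟩
    have hpos : (0:ℝ) < ε / (‖inv a ha‖ + 1) := by positivity
    exact Set.mem_iUnion.2 ⟨a, Set.mem_iUnion.2 ⟨ha, Set.mem_iUnion.2 ⟨haS,
      Metric.mem_ball_self hpos⟩⟩⟩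
  obtain ⟨b, hbH, hbU₁, hbU₂⟩ :
      (H ∩ (U₁ ∩ U₂)).Nonempty := by
    have := hHconn U₁ U₂ hU₁open hU₂open hcover hne₁ hne₂
    simpa [Set.inter_assoc] using this
  exact hHU₂ b ⟨hbH, hbU₂⟩ (hHU₁ b ⟨hbH, hbU₁⟩)

end AuxCompactGroup

open scoped Matrix

/-- Let `G` be a compact connected Lie group acting orthogonally and
linearly on `V = ℝᴺ` via a continuous representation `ρ`.  Let `γ₁, γ₂ : ℝ → V` be
smooth curves with `γ₁ 0 = γ₂ 0 = 0` such that for every `t` there is `g_t ∈ G` (not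
necessarily depending continuously on `t`) with `γ₂ t = g_t · γ₁ t`.  Let
`ξ₁ = γ₁' 0`, `ξ₂ = γ₂' 0`.  Then for every smooth differential `k`-form `α` on `V`
that is horizontal (i.e. vanishes whenever one of its arguments equals `η · x` at the
point `x`, for `η` in the Lie algebra of `G` — encoded as those matrices `η` whose
one-parameter group `exp (t • η)` stays in the image of `ρ`), the contraction
`(ξ₂ − ξ₁) ⌟ α` vanishes at the origin. -/
theorem horizontal_form_kills_difference_of_velocities
    (N k : ℕ) (G : Type*) [Group G] [TopologicalSpace G] [IsTopologicalGroup G]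
    [CompactSpace G] [ConnectedSpace G]
    (ρ : G →* Matrix.orthogonalGroup (Fin N) ℝ) (hρ : Continuous ρ)
    (γ₁ γ₂ : ℝ → EuclideanSpace ℝ (Fin N))
    (hγ₁ : ContDiff ℝ (⊤ : ℕ∞) γ₁) (hγ₂ : ContDiff ℝ (⊤ : ℕ∞) γ₂)
    (h0₁ : γ₁ 0 = 0) (h0₂ : γ₂ 0 = 0)
    (hrel : ∀ t : ℝ, ∃ g : G,
      Matrix.toEuclideanLin (ρ g : Matrix (Fin N) (Fin N) ℝ) (γ₁ t) = γ₂ t)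
    (α : EuclideanSpace ℝ (Fin N) →
      (EuclideanSpace ℝ (Fin N) [⋀^Fin k]→ₗ[ℝ] ℝ))
    (hαsmooth : ∀ vs : Fin k → EuclideanSpace ℝ (Fin N),
      Continuous (fun x => α x vs))
    (hαhor : ∀ η : Matrix (Fin N) (Fin N) ℝ,
      (∀ t : ℝ, ∃ h : G, (ρ h : Matrix (Fin N) (Fin N) ℝ) = NormedSpace.exp (t • η)) →
      ∀ (x : EuclideanSpace ℝ (Fin N)) (vs : Fin k → EuclideanSpace ℝ (Fin N)) (i : Fin k),
        vs i = Matrix.toEuclideanLin η x → α x vs = 0) :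
    ∀ (vs : Fin k → EuclideanSpace ℝ (Fin N)) (i : Fin k),
      vs i = deriv γ₂ 0 - deriv γ₁ 0 → α 0 vs = 0 := by
  classical
  intro vs i hvs
  letI : NormedRing (Matrix (Fin N) (Fin N) ℝ) := Matrix.linftyOpNormedRing
  letI : NormedAlgebra ℝ (Matrix (Fin N) (Fin N) ℝ) := Matrix.linftyOpNormedAlgebra
  haveI : CompleteSpace (Matrix (Fin N) (Fin N) ℝ) := FiniteDimensional.complete ℝ _
  set f : G → Matrix (Fin N) (Fin N) ℝ := fun g => ((ρ g : Matrix (Fin N) (Fin N) ℝ)) with hf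
  have hfcont : Continuous f := continuous_subtype_val.comp hρ
  set H : Set (Matrix (Fin N) (Fin N) ℝ) := Set.range f with hH
  have hHcp : IsCompact H := isCompact_range hfcont
  have hHcl : IsClosed H := hHcp.isClosed
  have hHconn : IsPreconnected H := (isPreconnected_range hfcont)
  have hH1 : (1:Matrix (Fin N) (Fin N) ℝ) ∈ H := ⟨1, by simp [hf]⟩
  have hHmul : ∀ a ∈ H, ∀ b ∈ H, a * b ∈ H := by
    rintro a ⟨g₁, rfl⟩ b ⟨g₂, rfl⟩
    exact ⟨g₁ * g₂, by simp [hf]⟩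
  have hHinv : ∀ a ∈ H, ∃ b ∈ H, a * b = 1 ∧ b * a = 1 := by
    rintro a ⟨g, rfl⟩
    refine ⟨f g⁻¹, ⟨g⁻¹, rfl⟩, ?_, ?_⟩
    · show (↑(ρ g) : Matrix (Fin N) (Fin N) ℝ) * (↑(ρ g⁻¹) : Matrix (Fin N) (Fin N) ℝ) = 1
      rw [← Submonoid.coe_mul, ← map_mul, mul_inv_cancel, map_one]
      rfl
    · show (↑(ρ g⁻¹) : Matrix (Fin N) (Fin N) ℝ) * (↑(ρ g) : Matrix (Fin N) (Fin N) ℝ) = 1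
      rw [← Submonoid.coe_mul, ← map_mul, inv_mul_cancel, map_one]
      rfl
  have hspan := sub_one_mem_span hHcl hHconn hH1 hHmul hHinv
  -- transfer to V
  set WV : Submodule ℝ (EuclideanSpace ℝ (Fin N)) :=
    Submodule.span ℝ {w : EuclideanSpace ℝ (Fin N) | ∃ η ∈ lieSet H,
      ∃ x : EuclideanSpace ℝ (Fin N), w = Matrix.toEuclideanLin η x} with hWV
  have htransfer : ∀ M ∈ Submodule.span ℝ {m : Matrix (Fin N) (Fin N) ℝ | ∃ η ∈ lieSet H, ∃ c : Matrix (Fin N) (Fin N) ℝ, m = η * c},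
      ∀ x : EuclideanSpace ℝ (Fin N), Matrix.toEuclideanLin M x ∈ WV := by
    intro M hM x
    induction hM using Submodule.span_induction with
    | mem w hw =>
      obtain ⟨η, hη, c, rfl⟩ := hw
      refine Submodule.subset_span ⟨η, hη, Matrix.toEuclideanLin c x, ?_⟩
      simp [Matrix.toEuclideanLin_apply]
    | zero => simp [map_zero]
    | add w₁ w₂ _ _ h1 h2 =>
      rw [map_add]
      exact WV.add_mem h1 h2
    | smul c w _ h =>
      rw [map_smul]
      exact WV.smul_mem c h
  -- each difference lies in WV
  have hdiff : ∀ t : ℝ, γ₂ t - γ₁ t ∈ WV := by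
    intro t
    obtain ⟨g, hg⟩ := hrel t
    have h1 := htransfer _ (hspan (f g) ⟨g, rfl⟩) (γ₁ t)
    have h2 : Matrix.toEuclideanLin ((f g : Matrix (Fin N) (Fin N) ℝ) - 1) (γ₁ t) = γ₂ t - γ₁ t := by
      rw [map_sub]
      simp only [LinearMap.sub_apply]
      rw [hg]
      congr 1
      simp [Matrix.toEuclideanLin_apply, Matrix.one_mulVec]
    rwa [h2] at h1
  -- derivative in WV
  have hWVcl : IsClosed (WV : Set (EuclideanSpace ℝ (Fin N))) := WV.closed_of_finiteDimensional
  have hd₁ : HasDerivAt γ₁ (deriv γ₁ 0) 0 :=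
    ((hγ₁.differentiable (by simp)) 0).hasDerivAt
  have hd₂ : HasDerivAt γ₂ (deriv γ₂ 0) 0 :=
    ((hγ₂.differentiable (by simp)) 0).hasDerivAt
  have hs₁ := hasDerivAt_iff_tendsto_slope.1 hd₁
  have hs₂ := hasDerivAt_iff_tendsto_slope.1 hd₂
  have hslim : Tendsto (fun t : ℝ => t⁻¹ • (γ₂ t - γ₁ t)) (𝓝[≠] (0:ℝ))
      (𝓝 (deriv γ₂ 0 - deriv γ₁ 0)) := by
    have := hs₂.sub hs₁
    refine this.congr' ?_
    filter_upwards [self_mem_nhdsWithin] with t (ht : t ≠ 0)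
    simp [slope_def_module, h0₁, h0₂, smul_sub]
  have hxi : deriv γ₂ 0 - deriv γ₁ 0 ∈ WV := by
    refine hWVcl.mem_of_tendsto hslim ?_
    filter_upwards with t
    exact WV.smul_mem _ (hdiff t)
  -- final contraction argument
  have hgen : ∀ w ∈ WV, α 0 (Function.update vs i w) = 0 := by
    intro w hw
    induction hw using Submodule.span_induction with
    | mem w hw =>
      obtain ⟨η, hη, x, rfl⟩ := hw
      have hkill : ∀ s : ℝ, s ≠ 0 →
          α (s • x) (Function.update vs i (Matrix.toEuclideanLin η x)) = 0 := by
        intro s hs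
        have h1 : α (s • x)
            (Function.update vs i (Matrix.toEuclideanLin η (s • x))) = 0 :=
          hαhor η hη (s • x) _ i (Function.update_self i _ vs)
        rw [map_smul] at h1
        rw [AlternatingMap.map_update_smul] at h1
        exact (smul_eq_zero_iff_right hs).mp h1
      have hcont : Tendsto (fun s : ℝ => α (s • x)
          (Function.update vs i (Matrix.toEuclideanLin η x))) (𝓝[≠] (0:ℝ))
          (𝓝 (α 0 (Function.update vs i (Matrix.toEuclideanLin η x)))) := by
        have hc := (hαsmooth (Function.update vs i (Matrix.toEuclideanLin η x)))
        have hsx : Tendsto (fun s : ℝ => s • x) (𝓝 (0:ℝ)) (𝓝 (0:EuclideanSpace ℝ (Fin N))) := by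
          have := (continuous_id.smul continuous_const :
            Continuous (fun s : ℝ => s • x)).tendsto 0
          convert this using 2 <;> simp
        exact ((hc.tendsto _).comp hsx).mono_left nhdsWithin_le_nhds
      have hzero : Tendsto (fun s : ℝ => α (s • x)
          (Function.update vs i (Matrix.toEuclideanLin η x))) (𝓝[≠] (0:ℝ)) (𝓝 0) := by
        refine Tendsto.congr' ?_ tendsto_const_nhds
        filter_upwards [self_mem_nhdsWithin] with s (hs : s ≠ 0)
        exact (hkill s hs).symm
      exact tendsto_nhds_unique hcont hzero
    | zero => simp [AlternatingMap.map_update_zero]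
    | add w₁ w₂ _ _ h1 h2 =>
      rw [AlternatingMap.map_update_add, h1, h2, add_zero]
    | smul c w _ h =>
      rw [AlternatingMap.map_update_smul, h, smul_zero]
  have := hgen _ hxi
  rwa [← hvs, Function.update_eq_self] at this
end
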